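/- Let m, k, t be positive integers. For x ∈ Fin m and a k×k complex matrix U, define the value-controlled gate C_x(U) on ℂ^{Fin m} ⊗ ℂ^{Fin k} as the block-diagonal matrix Σ_{y ≠ x} |y⟩⟨y| ⊗ I + |x⟩⟨x| ⊗ U. Suppose T is an invertible k×k complex matrix, D_0,…,D_{t−1} are diagonal k×k complex matrices, and set U_i = T · D_i · T⁻¹. Then for any values x_0,…,x_{t−1} ∈ Fin m: (i) the gates C_{x_i}(D_i) pairwise commute, and (ii) the product Π_{i=0}^{t−1} C_{x_i}(U_i) equals (I ⊗ T) · (Π_{i=0}^{t−1} C_{x_i}(D_i)) · (I ⊗ T⁻¹). -/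

import Mathlib

open scoped BigOperators Kronecker

lemma isDiag_mul_comm' {n : Type*} [Fintype n] [DecidableEq n]
    {A B : Matrix n n ℂ} (hA : A.IsDiag) (hB : B.IsDiag) : A * B = B * A := by
  rw [← hA.diagonal_diag, ← hB.diagonal_diag, Matrix.diagonal_mul_diagonal,
    Matrix.diagonal_mul_diagonal]
  have h : (fun i => A.diag i * B.diag i) = fun i => B.diag i * A.diag i :=
    funext fun i => mul_comm _ _
  rw [h]

lemma conj_prod_list' {n : Type*} [Fintype n] [DecidableEq n]
    (S S' : Matrix n n ℂ) (hSS' : S * S' = 1) (hS'S : S' * S = 1)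
    (L : List (Matrix n n ℂ)) :
    (L.map (fun A => S * A * S')).prod = S * L.prod * S' := by
  induction L with
  | nil => simpa using hSS'.symm
  | cons a L ih =>
      simp only [List.map_cons, List.prod_cons, ih]
      calc S * a * S' * (S * L.prod * S')
          = S * a * (S' * S) * (L.prod * S') := by noncomm_ring
        _ = S * (a * L.prod) * S' := by rw [hS'S]; noncomm_ring

lemma isDiag_sum' {n ι : Type*} [Fintype n] [DecidableEq n]
    (s : Finset ι) (f : ι → Matrix n n ℂ) (h : ∀ i ∈ s, (f i).IsDiag) :
    (∑ i ∈ s, f i).IsDiag := by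
  intro i j hij
  rw [Matrix.sum_apply]
  exact Finset.sum_eq_zero fun a ha => h a ha hij

lemma isDiag_stdBasis' {n : Type*} [DecidableEq n] (y : n) :
    (Matrix.single y y (1 : ℂ)).IsDiag := by
  intro i j hij
  simp only [Matrix.single, Matrix.of_apply]
  split
  · next h => exact absurd (h.1.symm.trans h.2) hij
  · rfl

/-- Parallelization of multi-controlled pairwise commuting gates (Høyer–Špalek):
if `U_i = T·D_i·T⁻¹` with the `D_i` diagonal, then the value-controlled gates
`C_{x_i}(D_i)` pairwise commute and
`∏ᵢ C_{x_i}(U_i) = (I ⊗ T)·(∏ᵢ C_{x_i}(D_i))·(I ⊗ T⁻¹)`. -/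
theorem controlled_commuting_gates_parallelize (m k t : ℕ)
    (hm : 0 < m) (hk : 0 < k) (ht : 0 < t)
    (C : Fin m → Matrix (Fin k) (Fin k) ℂ → Matrix (Fin m × Fin k) (Fin m × Fin k) ℂ)
    (hC : ∀ (x : Fin m) (U : Matrix (Fin k) (Fin k) ℂ),
      C x U = (∑ y ∈ Finset.univ.erase x,
          Matrix.single y y (1 : ℂ) ⊗ₖ (1 : Matrix (Fin k) (Fin k) ℂ))
        + Matrix.single x x (1 : ℂ) ⊗ₖ U)
    (T : Matrix (Fin k) (Fin k) ℂ) (hT : IsUnit T)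
    (D : Fin t → Matrix (Fin k) (Fin k) ℂ) (hD : ∀ i, (D i).IsDiag)
    (U : Fin t → Matrix (Fin k) (Fin k) ℂ) (hU : ∀ i, U i = T * D i * T⁻¹)
    (x : Fin t → Fin m) :
    (∀ i j : Fin t, C (x i) (D i) * C (x j) (D j) = C (x j) (D j) * C (x i) (D i)) ∧
    (List.ofFn fun i : Fin t => C (x i) (U i)).prod
      = ((1 : Matrix (Fin m) (Fin m) ℂ) ⊗ₖ T)
        * (List.ofFn fun i : Fin t => C (x i) (D i)).prod
        * ((1 : Matrix (Fin m) (Fin m) ℂ) ⊗ₖ T⁻¹) := by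
  have hTdet : IsUnit T.det := (Matrix.isUnit_iff_isUnit_det T).mp hT
  have hTT : T * T⁻¹ = 1 := Matrix.mul_nonsing_inv T hTdet
  have hT'T : T⁻¹ * T = 1 := Matrix.nonsing_inv_mul T hTdet
  have hdiag : ∀ (z : Fin m) (A : Matrix (Fin k) (Fin k) ℂ), A.IsDiag → (C z A).IsDiag := by
    intro z A hA
    rw [hC]
    apply Matrix.IsDiag.add
    · exact isDiag_sum' _ _ fun y _ => (isDiag_stdBasis' y).kronecker Matrix.isDiag_one
    · exact (isDiag_stdBasis' z).kronecker hA
  refine ⟨fun i j => isDiag_mul_comm' (hdiag _ _ (hD i)) (hdiag _ _ (hD j)), ?_⟩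
  have key : ∀ i : Fin t,
      C (x i) (U i)
        = ((1 : Matrix (Fin m) (Fin m) ℂ) ⊗ₖ T) * C (x i) (D i)
            * ((1 : Matrix (Fin m) (Fin m) ℂ) ⊗ₖ T⁻¹) := by
    intro i
    rw [hC, hC, hU]
    rw [Matrix.mul_add, Matrix.add_mul, Finset.mul_sum, Finset.sum_mul]
    congr 1
    · apply Finset.sum_congr rfl
      intro y _
      rw [← Matrix.mul_kronecker_mul, ← Matrix.mul_kronecker_mul]
      simp [hTT]
    · rw [← Matrix.mul_kronecker_mul, ← Matrix.mul_kronecker_mul]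
      simp [Matrix.mul_assoc]
  have hSS' : ((1 : Matrix (Fin m) (Fin m) ℂ) ⊗ₖ T)
      * ((1 : Matrix (Fin m) (Fin m) ℂ) ⊗ₖ T⁻¹) = 1 := by
    rw [← Matrix.mul_kronecker_mul, one_mul, hTT, Matrix.one_kronecker_one]
  have hS'S : ((1 : Matrix (Fin m) (Fin m) ℂ) ⊗ₖ T⁻¹)
      * ((1 : Matrix (Fin m) (Fin m) ℂ) ⊗ₖ T) = 1 := by
    rw [← Matrix.mul_kronecker_mul, one_mul, hT'T, Matrix.one_kronecker_one]
  have hfun : (fun i : Fin t => C (x i) (U i))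
      = ((fun A => ((1 : Matrix (Fin m) (Fin m) ℂ) ⊗ₖ T) * A
          * ((1 : Matrix (Fin m) (Fin m) ℂ) ⊗ₖ T⁻¹)) ∘ fun i : Fin t => C (x i) (D i)) :=
    funext key
  rw [hfun, ← List.map_ofFn]
  exact conj_prod_list' _ _ hSS' hS'S _
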